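/- Let d ≥ 1, let γ₁, …, γ_d be fixed real parameters defining the exponential time encoding T_e, let a₁, …, a_d be real coefficients defining the composite exponential dependency κ, and let W be a real d×d matrix. Let Δt₁ and Δt₂ be real time intervals and set Δt = Δt₁ + Δt₂. Then there exists a real d×d matrix W₁ such that for every row vector x ∈ ℝ^d, (x ⊙ T_e(Δt₁) ⊙ T_e(Δt₂)) W₁ = κ(Δt) · (x W), i.e., the decoupled two-stage computation (element-wise encoding of the two sub-intervals during preprocessing, followed by a single linear transformation) reproduces composite exponential message passing over the full interval for all input features simultaneously. -/

import Mathlib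

/-- Exponential time encoding: `T_e(Δt) = [e^{γ₁ Δt}, …, e^{γ_d Δt}]`. -/
noncomputable def expTimeEncoding {d : ℕ} (γ : Fin d → ℝ) (Δt : ℝ) : Fin d → ℝ :=
  fun i => Real.exp (γ i * Δt)

/-- Composite exponential dependency: `κ(Δt) = ∑ i, a_i e^{γ_i Δt}`. -/
noncomputable def compositeExpDependency {d : ℕ} (γ a : Fin d → ℝ) (Δt : ℝ) : ℝ :=
  ∑ i, a i * Real.exp (γ i * Δt)

/-- There is a matrix `W₁` such that for every row vector `x`,
`(x ⊙ T_e(Δt₁) ⊙ T_e(Δt₂)) W₁ = κ(Δt₁ + Δt₂) · (x W)`: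
the decoupled two-stage computation reproduces composite exponential message
passing over the full interval, simultaneously for all inputs. -/
theorem decoupled_CE_message_passing {d : ℕ} (hd : 1 ≤ d)
    (γ a : Fin d → ℝ) (W : Matrix (Fin d) (Fin d) ℝ) (Δt₁ Δt₂ : ℝ) :
    ∃ W₁ : Matrix (Fin d) (Fin d) ℝ, ∀ x : Fin d → ℝ,
      Matrix.vecMul (x * expTimeEncoding γ Δt₁ * expTimeEncoding γ Δt₂) W₁ =
        compositeExpDependency γ a (Δt₁ + Δt₂) • Matrix.vecMul x W := by
  classical
  set κ := compositeExpDependency γ a (Δt₁ + Δt₂)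
  refine ⟨fun i j => κ / Real.exp (γ i * Δt₁ + γ i * Δt₂) * W i j, fun x => ?_⟩
  funext j
  simp only [Matrix.vecMul, dotProduct, Pi.mul_apply, expTimeEncoding,
    Pi.smul_apply, smul_eq_mul, Finset.mul_sum]
  refine Finset.sum_congr rfl fun i _ => ?_
  have h : Real.exp (γ i * Δt₁) * Real.exp (γ i * Δt₂) ≠ 0 :=
    mul_ne_zero (Real.exp_ne_zero _) (Real.exp_ne_zero _)
  rw [Real.exp_add]
  field_simp
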